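/- Let c, d be small categories and let F : (d ⥤ Type) ⥤ (c ⥤ Type) be a familial functor (naturally isomorphic to X ↦ (C ↦ Σ_{I ∈ F(1)(C)} Hom_{d ⥤ Type}(F[I], X)) for some positions copresheaf F(1) and arities F[I]). Then F preserves all limits of shapes given by small connected categories; in particular, F preserves pullbacks, equalizers, and wide pullbacks. -/

import Mathlib

namespace Fam
open CategoryTheory Opposite Limits
private lemma sigmaExt {α : Type} {β : α → Type} {a a' : α} {b : β a} {b' : β a'}
    (h : a = a') (h' : HEq b b') : (⟨a, b⟩ : Σ x, β x) = ⟨a', b'⟩ := by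
  subst h; cases h'; rfl
variable {c d : Type} [SmallCategory c] [SmallCategory d]
def elHom (pos : c ⥤ Type) {C C' : c} (f : C ⟶ C') (I : pos.obj C) :
    pos.elementsMk C I ⟶ pos.elementsMk C' (pos.map f I) :=
  CategoryOfElements.homMk _ _ f rfl
lemma eqToHom_val {pos : c ⥤ Type} {x y : pos.Elements} (E : x = y) :
    (eqToHom E).val = eqToHom (congrArg Sigma.fst E) := by
  subst E; simp
@[simps]
def famApply (pos : c ⥤ Type) (ar : pos.Elementsᵒᵖ ⥤ d ⥤ Type) :
    (d ⥤ Type) ⥤ c ⥤ Type where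
  obj X :=
    { obj := fun C => Σ I : pos.obj C, ar.obj (op (pos.elementsMk C I)) ⟶ X
      map := fun {C C'} f => TypeCat.ofHom fun x => ⟨pos.map f x.1, ar.map (elHom pos f x.1).op ≫ x.2⟩
      map_id := by
        intro C
        apply ConcreteCategory.hom_ext
        intro x
        obtain ⟨I, g⟩ := x
        have h : pos.map (𝟙 C) I = I := by simp
        have hE : pos.elementsMk C I = pos.elementsMk C (pos.map (𝟙 C) I) := by rw [h]
        have he : elHom pos (𝟙 C) I = eqToHom hE := by
          apply CategoryOfElements.ext
          rw [eqToHom_val]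
          simp [elHom]
        dsimp
        refine sigmaExt h ?_
        rw [he]
        simp [eqToHom_op, eqToHom_map]
      map_comp := by
        intro C C' C'' f g
        apply ConcreteCategory.hom_ext
        intro x
        obtain ⟨I, u⟩ := x
        have h : pos.map (f ≫ g) I = pos.map g (pos.map f I) := by simp
        have hE : pos.elementsMk C'' (pos.map (f ≫ g) I)
            = pos.elementsMk C'' (pos.map g (pos.map f I)) := by rw [h]
        have hcomp : elHom pos f I ≫ elHom pos g (pos.map f I)
            = elHom pos (f ≫ g) I ≫ eqToHom hE := by
          apply CategoryOfElements.ext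
          rw [CategoryOfElements.comp_val, CategoryOfElements.comp_val, eqToHom_val]
          simp [elHom]
        dsimp
        refine sigmaExt h ?_
        rw [← Category.assoc, ← ar.map_comp, ← op_comp, hcomp, op_comp, ar.map_comp,
          Category.assoc]
        simp [eqToHom_op, eqToHom_map] }
  map {X Y} t :=
    { app := fun C => TypeCat.ofHom fun x => ⟨x.1, x.2 ≫ t⟩
      naturality := by
        intro C C' f
        apply ConcreteCategory.hom_ext
        intro x
        dsimp
        rw [Category.assoc] }
  map_id := by
    intro X
    apply NatTrans.ext
    funext C
    apply ConcreteCategory.hom_ext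
    intro x
    simp
  map_comp := by
    intro X Y Z s t
    apply NatTrans.ext
    funext C
    apply ConcreteCategory.hom_ext
    intro x
    simp

/-- The unit exhibiting `famApply pos (ar ⋙ G)` as the right coclosure `⌈F/G⌉`,
i.e. the left Kan extension of the familial functor `F = famApply pos ar` along `G`. -/
def coclosureUnit {e : Type} [SmallCategory e] (pos : c ⥤ Type)
    (ar : pos.Elementsᵒᵖ ⥤ e ⥤ Type) (G : (e ⥤ Type) ⥤ d ⥤ Type) :
    famApply pos ar ⟶ G ⋙ famApply pos (ar ⋙ G) where
  app X :=
    { app := fun C => TypeCat.ofHom fun x => ⟨x.1, G.map x.2⟩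
      naturality := by
        intro C C' f
        apply ConcreteCategory.hom_ext
        intro x
        show (⟨pos.map f x.1, G.map (ar.map (elHom pos f x.1).op ≫ x.2)⟩ :
            Σ I : pos.obj C', (ar ⋙ G).obj (op (pos.elementsMk C' I)) ⟶ G.obj X)
          = ⟨pos.map f x.1, G.map (ar.map (elHom pos f x.1).op) ≫ G.map x.2⟩
        rw [G.map_comp] }
  naturality := by
    intro X Y t
    apply NatTrans.ext
    funext C
    apply ConcreteCategory.hom_ext
    intro x
    show (⟨x.1, G.map (x.2 ≫ t)⟩ :
        Σ I : pos.obj C, (ar ⋙ G).obj (op (pos.elementsMk C I)) ⟶ G.obj Y)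
      = ⟨x.1, G.map x.2 ≫ G.map t⟩
    rw [G.map_comp]

section Aux

private lemma sigma_eq_elim {α : Type} {β : α → Type} {a a' : α} {b : β a} {b' : β a'}
    (h : (⟨a, b⟩ : Σ x, β x) = ⟨a', b'⟩) : ∃ _ : a = a', HEq b b' := by
  cases h; exact ⟨rfl, HEq.rfl⟩

private lemma comp_eqToHom_snd {E : Type*} [Category E] {α : Type} (A : α → E) {X : E}
    {a a' : α} (h : a = a') {f : A a ⟶ X} {g : A a' ⟶ X} (hf : HEq f g) :
    f = eqToHom (congrArg A h) ≫ g := by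
  subst h; cases hf; simp

private lemma heq_eqToHom_comp {E : Type*} [Category E] {α : Type} (A : α → E) {X : E}
    {a a' : α} (h : a = a') (g : A a' ⟶ X) : HEq (eqToHom (congrArg A h) ≫ g) g := by
  subst h; simp

variable (pos : c ⥤ Type) (ar : pos.Elementsᵒᵖ ⥤ d ⥤ Type)

/-- The arity copresheaf at a position. -/
private abbrev Ar (C : c) (I : pos.obj C) : d ⥤ Type := ar.obj (op (pos.elementsMk C I))

/-- Evaluation of `famApply` at an object `C`. -/
private abbrev Hc (C : c) : (d ⥤ Type) ⥤ Type :=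
  famApply pos ar ⋙ (evaluation c Type).obj C

variable {J : Type} [SmallCategory J] {K : J ⥤ d ⥤ Type} {C : c}
variable (s : Limits.Cone (K ⋙ Hc pos ar C)) (x : s.pt)

/-- The component of the cone at `j`, applied to `x`. -/
private def φ (j : J) : Σ I : pos.obj C, Ar pos ar C I ⟶ K.obj j := s.π.app j x

private lemma φ_step {j j' : J} (f : j ⟶ j') :
    φ pos ar s x j' = ⟨(φ pos ar s x j).1, (φ pos ar s x j).2 ≫ K.map f⟩ := by
  have := ConcreteCategory.congr_hom (s.w f) x
  exact this.symm

variable [IsConnected J]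

private lemma φ_const (j j' : J) : (φ pos ar s x j).1 = (φ pos ar s x j').1 :=
  constant_of_preserves_morphisms (fun j => (φ pos ar s x j).1)
    (fun j₁ j₂ f => (congrArg Sigma.fst (φ_step pos ar s x f)).symm) j j'

/-- The cone on `K` with apex the arity at the (constant) position of `x`. -/
private noncomputable def ψ : Limits.Cone K where
  pt := Ar pos ar C (φ pos ar s x (Classical.arbitrary J)).1
  π :=
    { app := fun j =>
        eqToHom (congrArg (Ar pos ar C) (φ_const pos ar s x (Classical.arbitrary J) j)) ≫
          (φ pos ar s x j).2
      naturality := by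
        intro j j' f
        have hstep : (⟨(φ pos ar s x j').1, (φ pos ar s x j').2⟩ :
            Σ I : pos.obj C, Ar pos ar C I ⟶ K.obj j')
            = ⟨(φ pos ar s x j).1, (φ pos ar s x j).2 ≫ K.map f⟩ := φ_step pos ar s x f
        obtain ⟨h1, h2⟩ := sigma_eq_elim hstep
        have : (φ pos ar s x j').2
            = eqToHom (congrArg (Ar pos ar C) h1) ≫ (φ pos ar s x j).2 ≫ K.map f :=
          comp_eqToHom_snd (Ar pos ar C) h1 h2
        simp only [Functor.const_obj_obj, Functor.const_obj_map, Category.id_comp, this,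
          ← Category.assoc, eqToHom_trans] }

private lemma Hc_preserves (C : c) (hJ : IsConnected J) :
    Limits.PreservesLimitsOfShape J (Hc pos ar C) := by
  constructor
  intro K
  constructor
  intro t ht
  constructor
  refine
    { lift := fun s => TypeCat.ofHom fun x =>
        ⟨(φ pos ar s x (Classical.arbitrary J)).1, ht.lift (ψ pos ar s x)⟩
      fac := ?_
      uniq := ?_ }
  · intro s j
    apply ConcreteCategory.hom_ext
    intro x
    have hfac := ht.fac (ψ pos ar s x) j
    show (⟨(φ pos ar s x (Classical.arbitrary J)).1, ht.lift (ψ pos ar s x) ≫ t.π.app j⟩ :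
        Σ I : pos.obj C, Ar pos ar C I ⟶ K.obj j) = φ pos ar s x j
    refine (congrArg (fun g : Ar pos ar C (φ pos ar s x (Classical.arbitrary J)).1 ⟶ K.obj j =>
      (⟨(φ pos ar s x (Classical.arbitrary J)).1, g⟩ : Σ I : pos.obj C, Ar pos ar C I ⟶ K.obj j))
      hfac).trans ?_
    show (⟨(φ pos ar s x (Classical.arbitrary J)).1,
        eqToHom (congrArg (Ar pos ar C) (φ_const pos ar s x (Classical.arbitrary J) j)) ≫
          (φ pos ar s x j).2⟩ :
        Σ I : pos.obj C, Ar pos ar C I ⟶ K.obj j) = φ pos ar s x j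
    exact sigmaExt (φ_const pos ar s x (Classical.arbitrary J) j)
      (heq_eqToHom_comp (Ar pos ar C) (φ_const pos ar s x (Classical.arbitrary J) j) (φ pos ar s x j).2)
  · intro s m hm
    apply ConcreteCategory.hom_ext
    intro x
    have hmj : ∀ j : J, (⟨(m x).1, (m x).2 ≫ t.π.app j⟩ :
        Σ I : pos.obj C, Ar pos ar C I ⟶ K.obj j) = φ pos ar s x j :=
      fun j => ConcreteCategory.congr_hom (hm j) x
    have h1 : ∀ j : J, (m x).1 = (φ pos ar s x j).1 :=
      fun j => congrArg Sigma.fst (hmj j)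
    set j₀ := Classical.arbitrary J with hj₀
    set u : Ar pos ar C (φ pos ar s x j₀).1 ⟶ t.pt :=
      eqToHom (congrArg (Ar pos ar C) (h1 j₀).symm) ≫ (m x).2 with hu_def
    have hu : u = ht.lift (ψ pos ar s x) := by
      apply ht.uniq (ψ pos ar s x)
      intro j
      obtain ⟨hj, hheq⟩ := sigma_eq_elim (hmj j)
      have hsnd : (m x).2 ≫ t.π.app j
          = eqToHom (congrArg (Ar pos ar C) (h1 j)) ≫ (φ pos ar s x j).2 :=
        comp_eqToHom_snd (Ar pos ar C) (h1 j) hheq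
      show u ≫ t.π.app j
          = eqToHom (congrArg (Ar pos ar C) (φ_const pos ar s x j₀ j)) ≫ (φ pos ar s x j).2
      rw [hu_def, Category.assoc, hsnd, ← Category.assoc, eqToHom_trans]
    have hmx2 : (m x).2 = eqToHom (congrArg (Ar pos ar C) (h1 j₀)) ≫ u := by
      rw [hu_def, ← Category.assoc, eqToHom_trans, eqToHom_refl, Category.id_comp]
    show (⟨(m x).1, (m x).2⟩ : Σ I : pos.obj C, Ar pos ar C I ⟶ t.pt)
      = ⟨(φ pos ar s x j₀).1, ht.lift (ψ pos ar s x)⟩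
    refine sigmaExt (h1 j₀) ?_
    rw [hmx2, hu]
    exact heq_eqToHom_comp (Ar pos ar C) (h1 j₀) _

private lemma famApply_preserves (J : Type) [SmallCategory J] [IsConnected J] :
    Limits.PreservesLimitsOfShape J (famApply pos ar) :=
  preservesLimitsOfShape_of_evaluation _ J fun C =>
    Hc_preserves pos ar C ‹_›

end Aux

/-- A familial functor `F : (d ⥤ Type) ⥤ (c ⥤ Type)` preserves all limits
of small connected shapes; in particular it preserves pullbacks, equalizers and wide
pullbacks. -/
theorem familial_preserves_connected_limits
    {c d : Type} [SmallCategory c] [SmallCategory d]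
    (F : (d ⥤ Type) ⥤ c ⥤ Type) (pos : c ⥤ Type)
    (ar : pos.Elementsᵒᵖ ⥤ d ⥤ Type) (e : famApply pos ar ≅ F) :
    (∀ (J : Type) [SmallCategory J] [IsConnected J],
      Nonempty (Limits.PreservesLimitsOfShape J F)) ∧
    Nonempty (Limits.PreservesLimitsOfShape Limits.WalkingCospan F) ∧
    Nonempty (Limits.PreservesLimitsOfShape Limits.WalkingParallelPair F) ∧
    (∀ ι : Type, Nonempty (Limits.PreservesLimitsOfShape (Limits.WidePullbackShape ι) F)) := by
  have main : ∀ (J : Type) [SmallCategory J] [IsConnected J],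
      Limits.PreservesLimitsOfShape J F := by
    intro J _ _
    have h1 : Limits.PreservesLimitsOfShape J (famApply pos ar) :=
      famApply_preserves pos ar J
    exact preservesLimitsOfShape_of_natIso e
  exact ⟨fun J _ _ => ⟨main J⟩, ⟨main _⟩, ⟨main _⟩, fun ι => ⟨main _⟩⟩

end Fam
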